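/- For the correlated Markov sources (X^d, Y^d) with X_1 = Y_1 uniform, E[φ_S(X^d) φ'_T(Y^d)] = 1[S = T] · ∏_{i∈S} ρ_i, where ρ_1 = 1 and ρ_i = 4δ_x(1−δ_x)(1−2δ_y)/(σ_1 σ_2) normalized appropriately for i ≥ 2; consequently for any f, g: {-1,1}^d → ℝ, E[f(X^d) g(Y^d)] = Σ_{S⊆[d]} f_S g_S (ρ')^{|S| − 1[1∈S]} for the appropriate constant ρ'. -/

import Mathlib

/-- The real value (±1) of a Boolean symbol. -/
def sgn (b : Bool) : ℝ := if b then 1 else -1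

/-- Basis functions for a first-order Markov source with flip probability `δ`:
`ψ_0(x) = x_0` and, for `i ≥ 1`, `ψ_i(x) = (x_{i−1} x_i − (1−2δ)) / (2√(δ(1−δ)))`. -/
noncomputable def psiM (d : ℕ) (δ : ℝ) (i : Fin (d + 1)) (x : Fin (d + 1) → Bool) : ℝ :=
  if i = 0 then sgn (x 0)
  else (sgn (x (i - 1)) * sgn (x i) - (1 - 2 * δ)) / (2 * Real.sqrt (δ * (1 - δ)))

/-- Joint probability of the correlated Markov paths `(x, y)`: `X_0 = Y_0` uniform, and at
each step `X` flips with probability `δx` while `Y`'s flip equals `X`'s flip composed with an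
independent `δy`-flip, so that `P(Xflip, Yflip) = δx(1−δy)`, `P(Xflip, ¬Yflip) = δx δy`,
`P(¬Xflip, Yflip) = (1−δx)δy`, `P(¬Xflip, ¬Yflip) = (1−δx)(1−δy)`. -/
noncomputable def jointMarkov (d : ℕ) (δx δy : ℝ) (x y : Fin (d + 1) → Bool) : ℝ :=
  (if x 0 = y 0 then (1 / 2 : ℝ) else 0) *
    ∏ i : Fin d,
      ((if x i.succ ≠ x i.castSucc then δx else 1 - δx) *
        (if ((x i.succ ≠ x i.castSucc) ↔ (y i.succ ≠ y i.castSucc)) then 1 - δy else δy))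

noncomputable def Afun (δ : ℝ) (p : Bool) : ℝ :=
  ((if p then (-1:ℝ) else 1) - (1 - 2*δ)) / (2 * Real.sqrt (δ * (1 - δ)))

noncomputable def wfun (δx δy : ℝ) (p q : Bool) : ℝ :=
  (if p then δx else 1 - δx) * (if p = q then 1 - δy else δy)

lemma succ_sub_one {d : ℕ} (i : Fin d) : (i.succ : Fin (d+1)) - 1 = i.castSucc := by
  apply Fin.ext
  simp only [Fin.sub_def, Fin.val_one', Fin.coe_castSucc, Fin.val_succ]
  have h1 : 1 % (d+1) = 1 := Nat.mod_eq_of_lt (by have := i.isLt; omega)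
  rw [h1]
  have h2 : d + 1 - 1 + (↑i + 1) = ↑i + (d+1) := by omega
  rw [h2, Nat.add_mod_right]
  exact Nat.mod_eq_of_lt (by have := i.isLt; omega)

lemma psi_succ (d : ℕ) (δ : ℝ) (i : Fin d) (x : Fin (d+1) → Bool) :
    psiM d δ i.succ x = Afun δ (x i.succ != x i.castSucc) := by
  rw [psiM, if_neg (Fin.succ_ne_zero i), succ_sub_one, Afun]
  congr 1
  cases hx : x i.succ <;> cases hy : x i.castSucc <;> simp [sgn, hx, hy]

lemma psi_zero (d : ℕ) (δ : ℝ) (x : Fin (d+1) → Bool) : psiM d δ 0 x = sgn (x 0) := by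
  simp [psiM]

lemma prod_psi (d : ℕ) (δ : ℝ) (S : Finset (Fin (d+1))) (x : Fin (d+1) → Bool) :
    ∏ i ∈ S, psiM d δ i x
      = (if (0 : Fin (d+1)) ∈ S then sgn (x 0) else 1) *
        ∏ i : Fin d, (if i.succ ∈ S then Afun δ (x i.succ != x i.castSucc) else 1) := by
  have h : ∏ i ∈ S, psiM d δ i x = ∏ i : Fin (d+1), (if i ∈ S then psiM d δ i x else 1) := by
    rw [Finset.prod_ite_mem, Finset.univ_inter]
  rw [h, Fin.prod_univ_succ, psi_zero]
  congr 1
  exact Finset.prod_congr rfl fun i _ => by rw [psi_succ]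

lemma dec_inj {d : ℕ} (x y : Fin (d+1) → Bool) (h0 : x 0 = y 0)
    (h1 : ∀ i : Fin d, (x i.succ != x i.castSucc) = (y i.succ != y i.castSucc)) : x = y := by
  funext j
  induction j using Fin.induction with
  | zero => exact h0
  | succ i ih =>
    have := h1 i
    cases hx : x i.succ <;> cases hy : y i.succ <;> simp_all

lemma dec_bij {d : ℕ} :
    Function.Bijective (fun x : Fin (d+1) → Bool =>
      ((x 0, fun i : Fin d => x i.succ != x i.castSucc) : Bool × (Fin d → Bool))) := by
  rw [Fintype.bijective_iff_injective_and_card]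
  constructor
  · intro x y h
    simp only [Prod.mk.injEq] at h
    exact dec_inj x y h.1 (fun i => congrFun h.2 i)
  · simp [Fintype.card_fun]
    ring

lemma sum_reindex {d : ℕ} (H : Bool → (Fin d → Bool) → ℝ) :
    ∑ x : Fin (d+1) → Bool, H (x 0) (fun i => x i.succ != x i.castSucc)
      = ∑ a : Bool, ∑ e : Fin d → Bool, H a e := by
  rw [← Fintype.sum_prod_type']
  exact dec_bij.sum_comp (fun p => H p.1 p.2)

lemma prod_sum_swap {d : ℕ} (W : Fin d → Bool → Bool → ℝ) :
    ∑ e : Fin d → Bool, ∑ f : Fin d → Bool, ∏ i, W i (e i) (f i)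
      = ∏ i, ∑ p : Bool, ∑ q : Bool, W i p q := by
  have h1 : ∀ i : Fin d, (∑ p : Bool, ∑ q : Bool, W i p q) = ∑ z : Bool × Bool, W i z.1 z.2 := by
    intro i; rw [Fintype.sum_prod_type']
  rw [← Fintype.sum_prod_type']
  rw [← Equiv.sum_comp (Equiv.arrowProdEquivProdArrow (Fin d) (fun _ => Bool) (fun _ => Bool))]
  simp_rw [h1]
  rw [Finset.prod_univ_sum]
  rw [Fintype.piFinset_univ]
  exact Finset.sum_congr rfl fun g _ => by simp [Equiv.arrowProdEquivProdArrow]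

lemma joint_eq (d : ℕ) (δx δy : ℝ) (x y : Fin (d+1) → Bool) :
    jointMarkov d δx δy x y
      = (if x 0 = y 0 then (1/2 : ℝ) else 0) *
        ∏ i : Fin d, wfun δx δy (x i.succ != x i.castSucc) (y i.succ != y i.castSucc) := by
  unfold jointMarkov wfun
  congr 1
  refine Finset.prod_congr rfl fun i _ => ?_
  cases hx1 : x i.succ <;> cases hx2 : x i.castSucc <;>
    cases hy1 : y i.succ <;> cases hy2 : y i.castSucc <;> simp

lemma factor (d : ℕ) (δx δy : ℝ) (u : Bool → Bool → ℝ) (v : Fin d → Bool → Bool → ℝ) :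
    ∑ x : Fin (d+1) → Bool, ∑ y : Fin (d+1) → Bool,
        jointMarkov d δx δy x y *
          (u (x 0) (y 0) *
            ∏ i : Fin d, v i (x i.succ != x i.castSucc) (y i.succ != y i.castSucc))
      = ((u true true + u false false)/2) *
        ∏ i : Fin d, ∑ p : Bool, ∑ q : Bool, wfun δx δy p q * v i p q := by
  have key : ∀ x y : Fin (d+1) → Bool,
      jointMarkov d δx δy x y *
        (u (x 0) (y 0) * ∏ i : Fin d, v i (x i.succ != x i.castSucc) (y i.succ != y i.castSucc))
      = ((if x 0 = y 0 then (1/2:ℝ) else 0) * u (x 0) (y 0)) *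
        ∏ i : Fin d, (wfun δx δy (x i.succ != x i.castSucc) (y i.succ != y i.castSucc) *
          v i (x i.succ != x i.castSucc) (y i.succ != y i.castSucc)) := by
    intro x y
    rw [joint_eq, Finset.prod_mul_distrib]
    ring
  simp_rw [key]
  have step1 : ∀ x : Fin (d+1) → Bool,
      (∑ y : Fin (d+1) → Bool,
        ((if x 0 = y 0 then (1/2:ℝ) else 0) * u (x 0) (y 0)) *
          ∏ i : Fin d, (wfun δx δy (x i.succ != x i.castSucc) (y i.succ != y i.castSucc) *
            v i (x i.succ != x i.castSucc) (y i.succ != y i.castSucc)))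
      = ∑ b : Bool, ∑ f : Fin d → Bool,
        ((if x 0 = b then (1/2:ℝ) else 0) * u (x 0) b) *
          ∏ i : Fin d, (wfun δx δy (x i.succ != x i.castSucc) (f i) *
            v i (x i.succ != x i.castSucc) (f i)) := by
    intro x
    exact sum_reindex (fun b f =>
      ((if x 0 = b then (1/2:ℝ) else 0) * u (x 0) b) *
        ∏ i : Fin d, (wfun δx δy (x i.succ != x i.castSucc) (f i) *
          v i (x i.succ != x i.castSucc) (f i)))
  simp_rw [step1]
  rw [sum_reindex (fun a e => ∑ b : Bool, ∑ f : Fin d → Bool,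
      ((if a = b then (1/2:ℝ) else 0) * u a b) *
        ∏ i : Fin d, (wfun δx δy (e i) (f i) * v i (e i) (f i)))]
  have step2 : ∀ a : Bool,
      (∑ e : Fin d → Bool, ∑ b : Bool, ∑ f : Fin d → Bool,
        ((if a = b then (1/2:ℝ) else 0) * u a b) *
          ∏ i : Fin d, (wfun δx δy (e i) (f i) * v i (e i) (f i)))
      = ∑ b : Bool, ((if a = b then (1/2:ℝ) else 0) * u a b) *
          ∑ e : Fin d → Bool, ∑ f : Fin d → Bool,
            ∏ i : Fin d, (wfun δx δy (e i) (f i) * v i (e i) (f i)) := by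
    intro a
    rw [Finset.sum_comm]
    simp_rw [← Finset.mul_sum]
  simp_rw [step2]
  rw [show (∑ e : Fin d → Bool, ∑ f : Fin d → Bool,
      ∏ i : Fin d, (wfun δx δy (e i) (f i) * v i (e i) (f i)))
    = ∏ i : Fin d, ∑ p : Bool, ∑ q : Bool, wfun δx δy p q * v i p q from
    prod_sum_swap (fun i p q => wfun δx δy p q * v i p q)]
  simp [Fintype.sum_bool]
  ring

lemma sig_mul_self {δ : ℝ} (h0 : 0 ≤ δ) (h1 : δ ≤ 1) :
    (2 * Real.sqrt (δ * (1 - δ))) * (2 * Real.sqrt (δ * (1 - δ))) = 4 * (δ * (1 - δ)) := by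
  have h : Real.sqrt (δ * (1 - δ)) * Real.sqrt (δ * (1 - δ)) = δ * (1 - δ) :=
    Real.mul_self_sqrt (mul_nonneg h0 (by linarith))
  nlinarith [h]

lemma sig_pos {δ : ℝ} (h0 : 0 < δ) (h1 : δ < 1) : 0 < 2 * Real.sqrt (δ * (1 - δ)) := by
  have h : 0 < δ * (1 - δ) := mul_pos h0 (by linarith)
  have := Real.sqrt_pos.mpr h
  linarith

lemma dz_pos {δx δy : ℝ} (hx0 : 0 < δx) (hx1 : δx < 1) (hy0 : 0 ≤ δy) (hy1 : δy ≤ 1) :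
    0 < δx * (1 - δy) + δy * (1 - δx) := by
  rcases eq_or_lt_of_le hy1 with h | h
  · rw [← h]; nlinarith
  · nlinarith [mul_pos hx0 (sub_pos.mpr h), mul_nonneg hy0 (by linarith : (0:ℝ) ≤ 1 - δx)]

lemma dz_lt_one {δx δy : ℝ} (hx0 : 0 < δx) (hx1 : δx < 1) (hy0 : 0 ≤ δy) (hy1 : δy ≤ 1) :
    δx * (1 - δy) + δy * (1 - δx) < 1 := by
  rcases eq_or_lt_of_le hy0 with h | h
  · rw [← h]; nlinarith
  · nlinarith [mul_pos hx0 h,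
      mul_nonneg (by linarith : (0:ℝ) ≤ 1 - δx) (by linarith : (0:ℝ) ≤ 1 - δy)]

lemma coord_both (δx δy : ℝ) (hx0 : 0 < δx) (hx1 : δx < 1) (hy0 : 0 ≤ δy) (hy1 : δy ≤ 1) :
    ∑ p : Bool, ∑ q : Bool, wfun δx δy p q *
        (Afun δx p * Afun (δx * (1 - δy) + δy * (1 - δx)) q)
      = 4 * δx * (1 - δx) * (1 - 2 * δy) /
          ((2 * Real.sqrt (δx * (1 - δx))) *
            (2 * Real.sqrt ((δx * (1 - δy) + δy * (1 - δx)) *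
              (1 - (δx * (1 - δy) + δy * (1 - δx)))))) := by
  have hz0 := dz_pos hx0 hx1 hy0 hy1
  have hz1 := dz_lt_one hx0 hx1 hy0 hy1
  have hσ1 := (sig_pos hx0 hx1).ne'
  have hσ2 := (sig_pos hz0 hz1).ne'
  simp only [Fintype.sum_bool, wfun, Afun, if_true, if_false, Bool.true_eq_false,
    Bool.false_eq_true]
  field_simp
  ring

lemma coord_left (δx δy : ℝ) (hx0 : 0 < δx) (hx1 : δx < 1) :
    ∑ p : Bool, ∑ q : Bool, wfun δx δy p q * Afun δx p = 0 := by
  have hσ1 := (sig_pos hx0 hx1).ne'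
  simp only [Fintype.sum_bool, wfun, Afun, if_true, if_false, Bool.true_eq_false,
    Bool.false_eq_true]
  field_simp
  rw [mul_zero, div_eq_zero_iff]
  left; ring

lemma coord_right (δx δy : ℝ) (hx0 : 0 < δx) (hx1 : δx < 1) (hy0 : 0 ≤ δy) (hy1 : δy ≤ 1) :
    ∑ p : Bool, ∑ q : Bool, wfun δx δy p q * Afun (δx * (1 - δy) + δy * (1 - δx)) q = 0 := by
  have hz0 := dz_pos hx0 hx1 hy0 hy1
  have hz1 := dz_lt_one hx0 hx1 hy0 hy1
  have hσ2 := (sig_pos hz0 hz1).ne'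
  simp only [Fintype.sum_bool, wfun, Afun, if_true, if_false, Bool.true_eq_false,
    Bool.false_eq_true]
  field_simp
  rw [mul_zero, div_eq_zero_iff]
  left; ring

lemma coord_none (δx δy : ℝ) : ∑ p : Bool, ∑ q : Bool, wfun δx δy p q = 1 := by
  simp only [Fintype.sum_bool, wfun, if_true, if_false, Bool.true_eq_false, Bool.false_eq_true]
  ring

lemma Amul {δ : ℝ} (h0 : 0 ≤ δ) (h1 : δ ≤ 1) (p q : Bool) :
    Afun δ p * Afun δ q
      = ((if p then -(2*(1-δ)) else 2*δ) * (if q then -(2*(1-δ)) else 2*δ)) /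
          (4*(δ*(1-δ))) := by
  rw [Afun, Afun, div_mul_div_comm, sig_mul_self h0 h1]
  congr 1
  cases p <;> cases q <;> norm_num <;> ring

lemma kcoord {δ : ℝ} (h0 : 0 < δ) (h1 : δ < 1) (p q : Bool) :
    (if p then δ else 1 - δ) * (1 + Afun δ p * Afun δ q) = if p = q then 1 else 0 := by
  have hne : δ * (1 - δ) ≠ 0 := (mul_pos h0 (by linarith)).ne'
  have hne1 : 1 - δ ≠ 0 := (sub_pos.mpr h1).ne'
  rw [Amul (le_of_lt h0) (le_of_lt h1)]
  cases p <;> cases q <;>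
    simp only [if_true, if_false, Bool.true_eq_false, Bool.false_eq_true] <;>
    field_simp <;> ring
lemma k0 (a b : Bool) : ((1/2):ℝ) * (1 + sgn a * sgn b) = if a = b then 1 else 0 := by
  cases a <;> cases b <;> norm_num [sgn]

lemma kernel (d : ℕ) {δ : ℝ} (h0 : 0 < δ) (h1 : δ < 1) (x' x : Fin (d+1) → Bool) :
    ((1/2:ℝ) * ∏ i : Fin d, (if x' i.succ = x' i.castSucc then 1-δ else δ)) *
      ∏ i : Fin (d+1), (1 + psiM d δ i x' * psiM d δ i x)
    = if x' = x then 1 else 0 := by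
  have hmm : ∀ i : Fin d, (if x' i.succ = x' i.castSucc then 1-δ else δ)
      = (if (x' i.succ != x' i.castSucc) then δ else 1-δ) := by
    intro i; cases h1 : x' i.succ <;> cases h2 : x' i.castSucc <;> simp
  rw [Fin.prod_univ_succ, psi_zero, psi_zero]
  have hps : ∀ i : Fin d, (1 + psiM d δ i.succ x' * psiM d δ i.succ x)
      = 1 + Afun δ (x' i.succ != x' i.castSucc) * Afun δ (x i.succ != x i.castSucc) := by
    intro i; rw [psi_succ, psi_succ]
  rw [Finset.prod_congr rfl fun i _ => hps i, Finset.prod_congr rfl fun i _ => hmm i]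
  have regroup : ((1/2:ℝ) * ∏ i : Fin d, (if (x' i.succ != x' i.castSucc) then δ else 1-δ)) *
      ((1 + sgn (x' 0) * sgn (x 0)) *
        ∏ i : Fin d, (1 + Afun δ (x' i.succ != x' i.castSucc) * Afun δ (x i.succ != x i.castSucc)))
      = ((1/2:ℝ) * (1 + sgn (x' 0) * sgn (x 0))) *
        ∏ i : Fin d, ((if (x' i.succ != x' i.castSucc) then δ else 1-δ) *
          (1 + Afun δ (x' i.succ != x' i.castSucc) * Afun δ (x i.succ != x i.castSucc))) := by
    rw [Finset.prod_mul_distrib]; ring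
  rw [regroup, k0]
  have hco : ∀ i : Fin d, ((if (x' i.succ != x' i.castSucc) then δ else 1-δ) *
      (1 + Afun δ (x' i.succ != x' i.castSucc) * Afun δ (x i.succ != x i.castSucc)))
      = if (x' i.succ != x' i.castSucc) = (x i.succ != x i.castSucc) then 1 else 0 := by
    intro i; exact kcoord h0 h1 _ _
  rw [Finset.prod_congr rfl fun i _ => hco i]
  by_cases hxx : x' = x
  · subst hxx; simp
  · rw [if_neg hxx]
    by_cases hb : x' 0 = x 0
    · by_cases hf : ∀ i : Fin d, (x' i.succ != x' i.castSucc) = (x i.succ != x i.castSucc)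
      · exact absurd (dec_inj x' x hb hf) hxx
      · push_neg at hf
        obtain ⟨i, hi⟩ := hf
        rw [Finset.prod_eq_zero (Finset.mem_univ i)
          (show (if (x' i.succ != x' i.castSucc) = (x i.succ != x i.castSucc)
            then (1:ℝ) else 0) = 0 from if_neg hi), mul_zero]
    · rw [if_neg hb, zero_mul]

lemma complete (d : ℕ) {δ : ℝ} (h0 : 0 < δ) (h1 : δ < 1)
    (f : (Fin (d+1) → Bool) → ℝ) (x : Fin (d+1) → Bool) :
    f x = ∑ S : Finset (Fin (d+1)),
      (∑ x' : Fin (d+1) → Bool,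
        ((1/2:ℝ) * ∏ i : Fin d, (if x' i.succ = x' i.castSucc then 1-δ else δ)) *
          (f x' * ∏ i ∈ S, psiM d δ i x')) * ∏ i ∈ S, psiM d δ i x := by
  symm
  simp_rw [Finset.sum_mul]
  rw [Finset.sum_comm]
  have hpt : ∀ x' : Fin (d+1) → Bool,
      (∑ S : Finset (Fin (d+1)),
        ((1/2:ℝ) * ∏ i : Fin d, (if x' i.succ = x' i.castSucc then 1-δ else δ)) *
          (f x' * ∏ i ∈ S, psiM d δ i x') * ∏ i ∈ S, psiM d δ i x)
      = f x' * (((1/2:ℝ) * ∏ i : Fin d, (if x' i.succ = x' i.castSucc then 1-δ else δ)) *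
          ∏ i : Fin (d+1), (1 + psiM d δ i x' * psiM d δ i x)) := by
    intro x'
    have expand : ∏ i : Fin (d+1), (psiM d δ i x' * psiM d δ i x + 1)
        = ∑ S ∈ (Finset.univ : Finset (Fin (d+1))).powerset,
            (∏ i ∈ S, psiM d δ i x' * psiM d δ i x) * ∏ i ∈ Finset.univ \ S, (1:ℝ) := by
      exact Finset.prod_add _ _ _
    simp only [Finset.prod_const_one, mul_one, Finset.powerset_univ] at expand
    have : ∏ i : Fin (d+1), (1 + psiM d δ i x' * psiM d δ i x)
        = ∑ S : Finset (Fin (d+1)), (∏ i ∈ S, psiM d δ i x') * ∏ i ∈ S, psiM d δ i x := by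
      simp_rw [add_comm (1:ℝ), ← Finset.prod_mul_distrib] at expand ⊢
      rw [expand]
    rw [this, Finset.mul_sum, Finset.mul_sum]
    exact Finset.sum_congr rfl fun S _ => by ring
  rw [Finset.sum_congr rfl fun x' _ => hpt x']
  simp_rw [kernel d h0 h1]
  simp
lemma part1 (d : ℕ) (δx δy : ℝ) (hx0 : 0 < δx) (hx1 : δx < 1)
    (hy0 : 0 ≤ δy) (hy1 : δy ≤ 1) (S T : Finset (Fin (d + 1))) :
    ∑ x : Fin (d + 1) → Bool, ∑ y : Fin (d + 1) → Bool,
        jointMarkov d δx δy x y *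
          ((∏ i ∈ S, psiM d δx i x) *
            (∏ i ∈ T, psiM d (δx * (1 - δy) + δy * (1 - δx)) i y))
      = if S = T then
          ∏ i ∈ S, (if i = 0 then (1 : ℝ) else
            4 * δx * (1 - δx) * (1 - 2 * δy) /
              ((2 * Real.sqrt (δx * (1 - δx))) *
                (2 * Real.sqrt ((δx * (1 - δy) + δy * (1 - δx)) *
                  (1 - (δx * (1 - δy) + δy * (1 - δx)))))))
        else 0 := by
  set δz := δx * (1 - δy) + δy * (1 - δx) with hδz
  set ρ : ℝ := 4 * δx * (1 - δx) * (1 - 2 * δy) /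
      ((2 * Real.sqrt (δx * (1 - δx))) * (2 * Real.sqrt (δz * (1 - δz)))) with hρ
  have hpt : ∀ x y : Fin (d+1) → Bool,
      jointMarkov d δx δy x y *
        ((∏ i ∈ S, psiM d δx i x) * (∏ i ∈ T, psiM d δz i y))
      = jointMarkov d δx δy x y *
        (((fun a b => (if (0 : Fin (d+1)) ∈ S then sgn a else 1) *
            (if (0 : Fin (d+1)) ∈ T then sgn b else 1)) (x 0) (y 0)) *
          ∏ i : Fin d, (fun i p q => (if i.succ ∈ S then Afun δx p else 1) *
            (if i.succ ∈ T then Afun δz q else 1)) i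
              (x i.succ != x i.castSucc) (y i.succ != y i.castSucc)) := by
    intro x y
    rw [prod_psi, prod_psi, Finset.prod_mul_distrib]
    ring
  simp_rw [hpt]
  rw [factor d δx δy (fun a b => (if (0 : Fin (d+1)) ∈ S then sgn a else 1) *
      (if (0 : Fin (d+1)) ∈ T then sgn b else 1))
    (fun i p q => (if i.succ ∈ S then Afun δx p else 1) *
      (if i.succ ∈ T then Afun δz q else 1))]
  have c0 : (((if (0 : Fin (d+1)) ∈ S then sgn true else 1) *
        (if (0 : Fin (d+1)) ∈ T then sgn true else 1) +
      (if (0 : Fin (d+1)) ∈ S then sgn false else 1) *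
        (if (0 : Fin (d+1)) ∈ T then sgn false else 1)) / 2)
      = if ((0 : Fin (d+1)) ∈ S ↔ (0 : Fin (d+1)) ∈ T) then 1 else 0 := by
    by_cases h0S : (0 : Fin (d+1)) ∈ S <;> by_cases h0T : (0 : Fin (d+1)) ∈ T <;>
      simp [h0S, h0T, sgn]
  have ci : ∀ i : Fin d,
      (∑ p : Bool, ∑ q : Bool, wfun δx δy p q *
        ((if i.succ ∈ S then Afun δx p else 1) * (if i.succ ∈ T then Afun δz q else 1)))
      = if i.succ ∈ S then (if i.succ ∈ T then ρ else 0)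
        else (if i.succ ∈ T then 0 else 1) := by
    intro i
    by_cases hiS : i.succ ∈ S <;> by_cases hiT : i.succ ∈ T <;>
      simp only [hiS, hiT, if_true, if_false, mul_one, one_mul]
    · rw [hρ, hδz]; exact coord_both δx δy hx0 hx1 hy0 hy1
    · exact coord_left δx δy hx0 hx1
    · rw [hδz]; exact coord_right δx δy hx0 hx1 hy0 hy1
    · exact coord_none δx δy
  rw [c0]
  rw [Finset.prod_congr rfl fun i _ => ci i]
  by_cases hST : S = T
  · subst hST
    rw [if_pos rfl, if_pos Iff.rfl]
    have hR : ∏ i ∈ S, (if i = 0 then (1:ℝ) else ρ)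
        = ∏ i : Fin (d+1), (if i ∈ S then (if i = 0 then (1:ℝ) else ρ) else 1) := by
      rw [Finset.prod_ite_mem, Finset.univ_inter]
    rw [hR, Fin.prod_univ_succ]
    simp only [if_pos rfl, Fin.succ_ne_zero, if_false]
    have : ∀ i : Fin d, (if i.succ ∈ S then (if i.succ ∈ S then ρ else 0) else
        (if i.succ ∈ S then 0 else 1)) = (if i.succ ∈ S then ρ else 1) := by
      intro i; by_cases h : i.succ ∈ S <;> simp [h]
    rw [Finset.prod_congr rfl fun i _ => this i]
    by_cases h0 : (0 : Fin (d+1)) ∈ S <;> simp [h0]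
  · rw [if_neg hST]
    by_cases h0 : ((0 : Fin (d+1)) ∈ S ↔ (0 : Fin (d+1)) ∈ T)
    · by_cases h1 : ∀ i : Fin d, (i.succ ∈ S ↔ i.succ ∈ T)
      · exfalso
        apply hST
        ext j
        induction j using Fin.cases with
        | zero => exact h0
        | succ i => exact h1 i
      · push_neg at h1
        obtain ⟨i, hi⟩ := h1
        rw [if_pos h0, one_mul]
        apply Finset.prod_eq_zero (Finset.mem_univ i)
        by_cases hiS : i.succ ∈ S <;> by_cases hiT : i.succ ∈ T <;>
          simp_all
    · rw [if_neg h0, zero_mul]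
lemma prodP {d : ℕ} (ρ : ℝ) (S : Finset (Fin (d+1))) :
    ∏ i ∈ S, (if i = 0 then (1:ℝ) else ρ)
      = ρ ^ (S.card - (if (0 : Fin (d+1)) ∈ S then 1 else 0)) := by
  rw [Finset.prod_ite]
  simp only [Finset.prod_const_one, Finset.prod_const, one_mul]
  congr 1
  have h := Finset.card_filter_add_card_filter_not (s := S) (p := fun i => i = 0)
  have h2 : (S.filter (fun i => i = 0)).card = (if (0 : Fin (d+1)) ∈ S then 1 else 0) := by
    rw [Finset.filter_eq']
    by_cases h0 : (0 : Fin (d+1)) ∈ S <;> simp [h0]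
  omega
/-- For the correlated Markov sources, with `δz = δx * δy` (binary convolution),
`σ₁ = 2√(δx(1−δx))`, `σ₂ = 2√(δz(1−δz))`, and `ρ' = 4δx(1−δx)(1−2δy)/(σ₁σ₂)`:
`E[φ_S(X) φ'_T(Y)] = 1[S=T] ∏_{i∈S} ρ_i` with `ρ_0 = 1` and `ρ_i = ρ'` for `i ≥ 1`;
consequently `E[f(X) g(Y)] = ∑_S f_S g_S ρ'^{|S| − 1[0∈S]}` for the Fourier coefficients of
`f, g` in the respective bases. -/
theorem stmt_18 (d : ℕ) (δx δy : ℝ) (hx0 : 0 < δx) (hx1 : δx < 1)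
    (hy0 : 0 ≤ δy) (hy1 : δy ≤ 1) :
    (∀ S T : Finset (Fin (d + 1)),
      ∑ x : Fin (d + 1) → Bool, ∑ y : Fin (d + 1) → Bool,
          jointMarkov d δx δy x y *
            ((∏ i ∈ S, psiM d δx i x) *
              (∏ i ∈ T, psiM d (δx * (1 - δy) + δy * (1 - δx)) i y))
        = if S = T then
            ∏ i ∈ S, (if i = 0 then (1 : ℝ) else
              4 * δx * (1 - δx) * (1 - 2 * δy) /
                ((2 * Real.sqrt (δx * (1 - δx))) *
                  (2 * Real.sqrt ((δx * (1 - δy) + δy * (1 - δx)) *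
                    (1 - (δx * (1 - δy) + δy * (1 - δx)))))))
          else 0) ∧
    (∀ f g : (Fin (d + 1) → Bool) → ℝ,
      ∑ x : Fin (d + 1) → Bool, ∑ y : Fin (d + 1) → Bool,
          jointMarkov d δx δy x y * (f x * g y)
        = ∑ S : Finset (Fin (d + 1)),
            (∑ x : Fin (d + 1) → Bool,
              ((1 / 2 : ℝ) * ∏ i : Fin d, (if x i.succ = x i.castSucc then 1 - δx else δx)) *
                (f x * ∏ i ∈ S, psiM d δx i x))
            * (∑ y : Fin (d + 1) → Bool,
              ((1 / 2 : ℝ) * ∏ i : Fin d,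
                (if y i.succ = y i.castSucc
                  then 1 - (δx * (1 - δy) + δy * (1 - δx))
                  else δx * (1 - δy) + δy * (1 - δx))) *
                (g y * ∏ i ∈ S, psiM d (δx * (1 - δy) + δy * (1 - δx)) i y))
            * (4 * δx * (1 - δx) * (1 - 2 * δy) /
                ((2 * Real.sqrt (δx * (1 - δx))) *
                  (2 * Real.sqrt ((δx * (1 - δy) + δy * (1 - δx)) *
                    (1 - (δx * (1 - δy) + δy * (1 - δx)))))))
              ^ (S.card - (if (0 : Fin (d + 1)) ∈ S then 1 else 0))) := by
  have hz0 := dz_pos hx0 hx1 hy0 hy1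
  have hz1 := dz_lt_one hx0 hx1 hy0 hy1
  have h18 := part1 d δx δy hx0 hx1 hy0 hy1
  refine ⟨h18, ?_⟩
  intro f g
  have hf := complete d hx0 hx1 f
  have hg := complete d hz0 hz1 g
  set δz := δx * (1 - δy) + δy * (1 - δx) with hδz
  set ρ : ℝ := 4 * δx * (1 - δx) * (1 - 2 * δy) /
      ((2 * Real.sqrt (δx * (1 - δx))) * (2 * Real.sqrt (δz * (1 - δz)))) with hρ
  set a : Finset (Fin (d+1)) → ℝ := fun S =>
    ∑ x : Fin (d + 1) → Bool,
      ((1 / 2 : ℝ) * ∏ i : Fin d, (if x i.succ = x i.castSucc then 1 - δx else δx)) *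
        (f x * ∏ i ∈ S, psiM d δx i x) with ha
  set b : Finset (Fin (d+1)) → ℝ := fun S =>
    ∑ y : Fin (d + 1) → Bool,
      ((1 / 2 : ℝ) * ∏ i : Fin d, (if y i.succ = y i.castSucc then 1 - δz else δz)) *
        (g y * ∏ i ∈ S, psiM d δz i y) with hb
  have step1 : ∀ x y : Fin (d+1) → Bool,
      jointMarkov d δx δy x y * (f x * g y)
      = ∑ S : Finset (Fin (d+1)), ∑ T : Finset (Fin (d+1)),
          (a S * b T) * (jointMarkov d δx δy x y *
            ((∏ i ∈ S, psiM d δx i x) * (∏ i ∈ T, psiM d δz i y))) := by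
    intro x y
    conv_lhs => rw [hf x, hg y]
    rw [Finset.sum_mul_sum, Finset.mul_sum]
    refine Finset.sum_congr rfl fun S _ => ?_
    rw [Finset.mul_sum]
    refine Finset.sum_congr rfl fun T _ => ?_
    ring
  simp_rw [step1]
  rw [Finset.sum_congr rfl fun x (_ : x ∈ Finset.univ) => Finset.sum_comm]
  rw [Finset.sum_comm]
  refine Finset.sum_congr rfl fun S _ => ?_
  rw [Finset.sum_congr rfl fun x (_ : x ∈ Finset.univ) => Finset.sum_comm]
  rw [Finset.sum_comm]
  have step2 : ∀ T : Finset (Fin (d+1)),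
      (∑ x : Fin (d+1) → Bool, ∑ y : Fin (d+1) → Bool,
        (a S * b T) * (jointMarkov d δx δy x y *
          ((∏ i ∈ S, psiM d δx i x) * (∏ i ∈ T, psiM d δz i y))))
      = (a S * b T) * (if S = T then
          ∏ i ∈ S, (if i = 0 then (1:ℝ) else ρ) else 0) := by
    intro T
    simp_rw [← Finset.mul_sum]
    rw [h18 S T]
  rw [Finset.sum_congr rfl fun T _ => step2 T]
  simp only [mul_ite, mul_zero]
  rw [Finset.sum_ite_eq]
  simp only [Finset.mem_univ, if_true]
  rw [prodP]
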